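/- For every real c > 0 and all non-negative integers x, y, there exist a probability space, a filtration {F_n}, and a martingale {X_n}_{n≥0} adapted to {F_n} satisfying |X_{m+1} - X_m| ≤ c almost surely for every m ≥ 0, such that for every non-negative integer m, P(X_m - X_0 ≥ x·c or X_m - X_0 ≤ -y·c) = G(x, y, m). -/

import Mathlib

open MeasureTheory Filter

/-- `Ib n m = Σ_{z=0}^{n} ((1 + (-1)^{n-z}) / 2^m) · m!/(z!(m-z)!)`, empty sum for `n < 0`. -/
noncomputable def Ib (n : ℤ) (m : ℕ) : ℝ :=
  ∑ z ∈ Finset.range (n + 1).toNat,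
    ((1 + (-1 : ℝ) ^ (n.toNat - z)) / 2 ^ m) * (m.choose z)

/-- The function `G(x, y, m)` of the paper. -/
noncomputable def Gfun (x y m : ℕ) : ℝ :=
  if x = 0 ∧ y = 0 then 1 else
    ∑ n ∈ Finset.range (m / (2 * (x + y)) + 1),
      (2 * Ib (((m : ℤ) - x) / 2 - ((x : ℤ) + y) * n) (2 * (((m : ℤ) - x) / 2) + x + 2).toNat
       - 2 * Ib (((m : ℤ) - x) / 2 - y - ((x : ℤ) + y) * n) (2 * (((m : ℤ) - x) / 2) + x + 2).toNat
       + 2 * Ib (((m : ℤ) - y) / 2 - ((x : ℤ) + y) * n) (2 * (((m : ℤ) - y) / 2) + y + 2).toNat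
       - 2 * Ib (((m : ℤ) - y) / 2 - x - ((x : ℤ) + y) * n) (2 * (((m : ℤ) - y) / 2) + y + 2).toNat)

/-- The piecewise-linear interpolation `H_{n,m}(t)` of the paper. -/
noncomputable def Hfun (n m : ℕ) (t : ℝ) : ℝ :=
  if (n : ℝ) ≤ |t| then 1 else
    (1 - ((n : ℝ) + t) / 2 + (⌊((n : ℝ) + t) / 2⌋ : ℤ))
        * Gfun (⌊((n : ℝ) + t) / 2⌋).toNat (n - (⌊((n : ℝ) + t) / 2⌋).toNat) m
    + (((n : ℝ) + t) / 2 - (⌊((n : ℝ) + t) / 2⌋ : ℤ))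
        * Gfun ((⌊((n : ℝ) + t) / 2⌋).toNat + 1) (n - (⌊((n : ℝ) + t) / 2⌋).toNat - 1) m

/-! ### Parity binomial sums -/

/-- `Jn k M = Σ_{z ≤ k, z ≡ k [2]} C(M,z)`. -/
def Jn (k M : ℕ) : ℕ :=
  ∑ z ∈ Finset.range (k + 1), if (k - z) % 2 = 0 then M.choose z else 0

/-- Integer-argument version, `0` for negative arguments. -/
def Jz (n : ℤ) (M : ℕ) : ℕ := if 0 ≤ n then Jn n.toNat M else 0

lemma Jn_zero (M : ℕ) : Jn 0 M = 1 := by simp [Jn]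

lemma Ib_eq (n : ℤ) (M : ℕ) : Ib n M = 2 * (Jz n M : ℝ) / 2 ^ M := by
  rcases lt_or_ge n 0 with hn | hn
  · have h0 : (n + 1).toNat = 0 := by omega
    have : Jz n M = 0 := by simp [Jz, not_le.mpr hn]
    simp [Ib, h0, this]
  · have h0 : (n + 1).toNat = n.toNat + 1 := by omega
    rw [Ib, h0, Jz, if_pos hn, Jn, Nat.cast_sum, Finset.mul_sum, Finset.sum_div]
    refine Finset.sum_congr rfl fun z hz => ?_
    rcases Nat.even_or_odd (n.toNat - z) with he | ho
    · rw [he.neg_one_pow, if_pos (Nat.even_iff.mp he)]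
      ring
    · have ho2 := Nat.odd_iff.mp ho
      rw [ho.neg_one_pow, if_neg (by omega : ¬ (n.toNat - z) % 2 = 0)]
      push_cast [ho2]; ring

lemma Ib_neg {n : ℤ} (hn : n < 0) (M : ℕ) : Ib n M = 0 := by
  have h0 : (n + 1).toNat = 0 := by omega
  simp [Ib, h0]

lemma Jn_succ (k M : ℕ) : Jn (k + 1) (M + 1) = Jn (k + 1) M + Jn k M := by
  have peel : ∀ N : ℕ, Jn (k + 1) N
      = (∑ i ∈ Finset.range (k + 1), if (k - i) % 2 = 0 then N.choose (i + 1) else 0)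
        + (if (k + 1) % 2 = 0 then 1 else 0) := by
    intro N
    rw [Jn, Finset.sum_range_succ']
    congr 1
    · refine Finset.sum_congr rfl fun i hi => ?_
      have : (k + 1 - (i + 1)) % 2 = (k - i) % 2 := by omega
      rw [this]
    · simp
  rw [peel, peel]
  have : Jn k M = ∑ i ∈ Finset.range (k + 1), if (k - i) % 2 = 0 then M.choose i else 0 := rfl
  rw [this]
  have : ∀ i, (if (k - i) % 2 = 0 then (M + 1).choose (i + 1) else 0)
      = (if (k - i) % 2 = 0 then M.choose (i + 1) else 0)
        + (if (k - i) % 2 = 0 then M.choose i else 0) := by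
    intro i
    by_cases h : (k - i) % 2 = 0 <;> simp [h, Nat.choose_succ_succ, Nat.add_comm]
  simp only [this, Finset.sum_add_distrib]
  ring

lemma Jz_succ (n : ℤ) (M : ℕ) : Jz n (M + 1) = Jz n M + Jz (n - 1) M := by
  rcases lt_trichotomy n 0 with h | h | h
  · simp [Jz, not_le.mpr h, not_le.mpr (by omega : n - 1 < 0)]
    intro h'; omega
  · subst h; simp [Jz, Jn_zero, not_le.mpr (by omega : (-1 : ℤ) < 0)]
  · have h1 : (0:ℤ) ≤ n := le_of_lt h
    have h2 : (0:ℤ) ≤ n - 1 := by omega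
    have h3 : n.toNat = (n - 1).toNat + 1 := by omega
    simp only [Jz, if_pos h1, if_pos h2, h3]
    exact Jn_succ _ _

/-- Half of the parity class of binomials of `2k+2` below `k`. -/
lemma Jn_half (k : ℕ) : Jn k (2 * k + 2) = 4 ^ k := by
  set M := 2 * k + 2 with hM
  -- rephrase parity condition
  have hJ : Jn k M = ∑ z ∈ Finset.range (k + 1), if z % 2 = k % 2 then M.choose z else 0 := by
    refine Finset.sum_congr rfl fun z hz => ?_
    have hzk : z ≤ k := by simpa [Nat.lt_succ_iff] using hz
    have : (k - z) % 2 = 0 ↔ z % 2 = k % 2 := by omega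
    simp [this]
  -- the full parity sum
  set F : ℕ := ∑ z ∈ Finset.range (M + 1), if z % 2 = k % 2 then M.choose z else 0 with hF
  have hsplit : F = (∑ z ∈ Finset.Ico 0 (k + 2), if z % 2 = k % 2 then M.choose z else 0)
      + ∑ z ∈ Finset.Ico (k + 2) (M + 1), (if z % 2 = k % 2 then M.choose z else 0) := by
    rw [hF, Finset.range_eq_Ico,
      ← Finset.sum_Ico_consecutive _ (by omega : 0 ≤ k + 2) (by omega : k + 2 ≤ M + 1)]
  have hlow : (∑ z ∈ Finset.Ico 0 (k + 2), if z % 2 = k % 2 then M.choose z else 0)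
      = Jn k M := by
    rw [hJ, ← Finset.range_eq_Ico, Finset.sum_range_succ,
      if_neg (by omega : ¬ (k + 1) % 2 = k % 2), add_zero]
  have hrefl : ∑ z ∈ Finset.Ico (k + 2) (M + 1), (if z % 2 = k % 2 then M.choose z else 0)
      = Jn k M := by
    rw [hJ, Finset.range_eq_Ico]
    refine Finset.sum_bij' (fun z _ => M - z) (fun w _ => M - w) ?_ ?_ ?_ ?_ ?_
    · intro a ha; simp only [Finset.mem_Ico] at ha ⊢; omega
    · intro a ha; simp only [Finset.mem_Ico] at ha ⊢; omega
    · intro a ha; simp only [Finset.mem_Ico] at ha; show M - (M - a) = a; omega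
    · intro a ha; simp only [Finset.mem_Ico] at ha; show M - (M - a) = a; omega
    · intro a ha
      simp only [Finset.mem_Ico] at ha
      have h1 : (M - a) % 2 = a % 2 := by omega
      have h2 : M.choose (M - a) = M.choose a := Nat.choose_symm (by omega)
      rw [h1, h2]
  set S2 : ℕ := ∑ z ∈ Finset.range (M + 1), if z % 2 = k % 2 then 0 else M.choose z with hS2
  have hcomb : F + S2 = 2 ^ M := by
    rw [hF, hS2, ← Finset.sum_add_distrib]
    have he : ∀ z, ((if z % 2 = k % 2 then M.choose z else 0)
        + if z % 2 = k % 2 then 0 else M.choose z) = M.choose z := by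
      intro z; by_cases h : z % 2 = k % 2 <;> simp [h]
    simp only [he]
    exact Nat.sum_range_choose M
  have hFS : F = S2 := by
    have halt0 : ∑ z ∈ Finset.range (M + 1), (-1 : ℤ) ^ z * (M.choose z : ℤ) = 0 := by
      rw [Int.alternating_sum_range_choose]; simp [hM]
    have hsign : ∀ z : ℕ, (-1 : ℤ) ^ z * (M.choose z : ℤ)
        = (-1 : ℤ) ^ (k % 2) * ((if z % 2 = k % 2 then (M.choose z : ℤ) else 0)
          - (if z % 2 = k % 2 then 0 else (M.choose z : ℤ))) := by
      intro z
      by_cases hz : z % 2 = 0 <;> by_cases hk : k % 2 = 0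
      · rw [(Nat.even_iff.mpr hz).neg_one_pow, if_pos (by omega : z % 2 = k % 2),
          if_pos (by omega : z % 2 = k % 2), hk]; ring
      · rw [(Nat.even_iff.mpr hz).neg_one_pow, if_neg (by omega : ¬ z % 2 = k % 2),
          if_neg (by omega : ¬ z % 2 = k % 2), show k % 2 = 1 by omega]; ring
      · rw [(Nat.odd_iff.mpr (by omega)).neg_one_pow, if_neg (by omega : ¬ z % 2 = k % 2),
          if_neg (by omega : ¬ z % 2 = k % 2), hk]; ring
      · rw [(Nat.odd_iff.mpr (by omega)).neg_one_pow, if_pos (by omega : z % 2 = k % 2),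
          if_pos (by omega : z % 2 = k % 2), show k % 2 = 1 by omega]; ring
    rw [Finset.sum_congr rfl (fun z _ => hsign z), ← Finset.mul_sum,
      Finset.sum_sub_distrib] at halt0
    have hne : ((-1 : ℤ) ^ (k % 2)) ≠ 0 := pow_ne_zero _ (by norm_num)
    have hz0 : (∑ z ∈ Finset.range (M + 1), if z % 2 = k % 2 then (M.choose z : ℤ) else 0)
        - (∑ z ∈ Finset.range (M + 1), if z % 2 = k % 2 then 0 else (M.choose z : ℤ)) = 0 := by
      rcases mul_eq_zero.mp halt0 with h | h
      · exact absurd h hne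
      · exact h
    have hFZ : (F : ℤ) = ∑ z ∈ Finset.range (M + 1), if z % 2 = k % 2 then (M.choose z : ℤ) else 0 := by
      rw [hF]; push_cast; rfl
    have hS2Z : (S2 : ℤ) = ∑ z ∈ Finset.range (M + 1), if z % 2 = k % 2 then 0 else (M.choose z : ℤ) := by
      rw [hS2]; push_cast; rfl
    have : (F : ℤ) = (S2 : ℤ) := by rw [hFZ, hS2Z]; linarith [hz0]
    exact_mod_cast this
  have hpow : (2 : ℕ) ^ M = 4 ^ k * 4 := by
    rw [hM, pow_add, pow_mul]; norm_num
  omega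
/-! ### The one-barrier summands -/

lemma lt_div_succ_mul (m k : ℕ) (hk : 0 < k) : m < (m / k + 1) * k := by
  have h1 := Nat.div_add_mod m k
  have h2 := Nat.mod_lt m hk
  have h3 : (m / k + 1) * k = k * (m / k) + k := by ring
  omega

noncomputable def Aterm (x y m n : ℕ) : ℝ :=
  2 * Ib (((m : ℤ) - x) / 2 - ((x : ℤ) + y) * n) (2 * (((m : ℤ) - x) / 2) + x + 2).toNat
  - 2 * Ib (((m : ℤ) - x) / 2 - y - ((x : ℤ) + y) * n) (2 * (((m : ℤ) - x) / 2) + x + 2).toNat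

noncomputable def Afun (x y m : ℕ) : ℝ :=
  ∑ n ∈ Finset.range (m / (2 * (x + y)) + 1), Aterm x y m n

lemma Gfun_eq_A (x y m : ℕ) (h : ¬(x = 0 ∧ y = 0)) :
    Gfun x y m = Afun x y m + Afun y x m := by
  rw [Gfun, if_neg h, Afun, Afun]
  have hc2 : y + x = x + y := by ring
  rw [hc2, ← Finset.sum_add_distrib]
  refine Finset.sum_congr rfl fun n _ => ?_
  rw [Aterm, Aterm, show ((y : ℤ) + x) = ((x : ℤ) + y) from by ring]
  ring

lemma Aterm_vanish (x y m n : ℕ) (h : m < 2 * (x + y) * n) : Aterm x y m n = 0 := by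
  have h' : m < 2 * ((x + y) * n) := by rw [← Nat.mul_assoc]; exact h
  have hc : (m : ℤ) < 2 * (((x : ℤ) + y) * n) := by exact_mod_cast h'
  have key : ∀ t : ℤ, (m : ℤ) < 2 * t → ((m : ℤ) - x) / 2 - t < 0 := by
    intro t ht; omega
  have key2 : ∀ t : ℤ, (m : ℤ) < 2 * t → ((m : ℤ) - x) / 2 - y - t < 0 := by
    intro t ht; omega
  rw [Aterm, Ib_neg (key _ hc), Ib_neg (key2 _ hc)]
  ring

lemma Afun_ext (x y m K : ℕ) (hs : 0 < x + y) (hK : m / (2 * (x + y)) ≤ K) :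
    Afun x y m = ∑ n ∈ Finset.range (K + 1), Aterm x y m n := by
  rw [Afun]
  refine Finset.sum_subset (Finset.range_subset_range.mpr (by omega)) fun n hn hn' => ?_
  simp only [Finset.mem_range] at hn hn'
  refine Aterm_vanish x y m n ?_
  calc m < (m / (2 * (x + y)) + 1) * (2 * (x + y)) := lt_div_succ_mul m _ (by omega)
  _ ≤ n * (2 * (x + y)) := Nat.mul_le_mul_right _ (by omega)
  _ = 2 * (x + y) * n := by ring

lemma Afun_y0 (x m : ℕ) : Afun x 0 m = 0 := by
  rw [Afun]
  refine Finset.sum_eq_zero fun n _ => ?_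
  rw [Aterm]
  norm_num

lemma Afun_zero (x y : ℕ) (hx : 0 < x) : Afun x y 0 = 0 := by
  rw [Afun]
  refine Finset.sum_eq_zero fun n _ => ?_
  have hP : (0 : ℤ) ≤ ((x : ℤ) + y) * n := by positivity
  have hx' : (1 : ℤ) ≤ (x : ℤ) := by exact_mod_cast hx
  rw [Aterm, Ib_neg (by push_cast; omega), Ib_neg (by push_cast; omega)]
  ring

lemma Aterm_eq (x y m n : ℕ) (t : ℤ) (M : ℕ) (h1 : ((m : ℤ) - x) / 2 = t)
    (h2 : (2 * t + x + 2).toNat = M) :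
    Aterm x y m n = 4 * (Jz (t - ((x : ℤ) + y) * n) M : ℝ) / 2 ^ M
      - 4 * (Jz (t - y - ((x : ℤ) + y) * n) M : ℝ) / 2 ^ M := by
  rw [Aterm, h1, h2, Ib_eq, Ib_eq]
  ring

lemma Afun_x0 (y m : ℕ) (hy : 0 < y) : Afun 0 y m = 1 := by
  set k := m / 2 with hk
  have hk2 : 2 * k ≤ m ∧ m ≤ 2 * k + 1 := by omega
  have ht : (((m : ℤ)) - ((0 : ℕ) : ℤ)) / 2 = (k : ℤ) := by push_cast; omega
  have hM : (2 * ((k : ℤ)) + (0 : ℕ) + 2).toNat = 2 * k + 2 := by push_cast; omega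
  set K := m / (2 * (0 + y)) with hK
  set f : ℕ → ℝ := fun j => 4 * (Jz ((k : ℤ) - y * j) (2 * k + 2) : ℝ) / 2 ^ (2 * k + 2)
    with hf
  have hterm : ∀ n : ℕ, Aterm 0 y m n = f n - f (n + 1) := by
    intro n
    rw [Aterm_eq 0 y m n k (2 * k + 2) ht hM, hf]
    simp only
    have e1 : (k : ℤ) - (((0 : ℕ) : ℤ) + y) * n = (k : ℤ) - y * n := by push_cast; ring
    have e2 : (k : ℤ) - ((y : ℕ) : ℤ) - (((0 : ℕ) : ℤ) + y) * n = (k : ℤ) - y * ((n : ℕ) + 1 : ℕ) := by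
      push_cast; ring
    rw [e1, e2]
  rw [Afun, ← hK, Finset.sum_congr rfl (fun n _ => hterm n), Finset.sum_range_sub']
  have hlast : Jz ((k : ℤ) - y * ((K + 1 : ℕ) : ℤ)) (2 * k + 2) = 0 := by
    rw [Jz, if_neg]
    push_neg
    have hmK : m < (m / (2 * (0 + y)) + 1) * (2 * (0 + y)) := lt_div_succ_mul m _ (by omega)
    rw [← hK] at hmK
    have hmK' : (m : ℤ) < ((K : ℤ) + 1) * (2 * ((0 : ℤ) + y)) := by exact_mod_cast hmK
    have h9 : (0:ℤ) ≤ (y : ℤ) * ((K : ℤ)+1) := by positivity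
    push_cast
    push_cast at hmK'
    nlinarith [hk2.1, hk2.2]
  have hfirst : Jz ((k : ℤ) - y * ((0 : ℕ) : ℤ)) (2 * k + 2) = 4 ^ k := by
    rw [Jz, if_pos (by push_cast; omega)]
    have harg : ((k : ℤ) - y * ((0 : ℕ) : ℤ)).toNat = k := by push_cast; omega
    rw [harg, Jn_half]
  rw [hf]
  simp only
  rw [show ((0 : ℕ) : ℤ) = ((0 : ℕ) : ℤ) from rfl]
  push_cast
  push_cast at hfirst hlast
  rw [hfirst, hlast]
  have hp : (2 : ℝ) ^ (2 * k + 2) = 4 * 4 ^ k := by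
    rw [pow_add, pow_mul]
    norm_num
    ring
  rw [hp]
  push_cast
  have h4 : (0:ℝ) < 4 ^ k := by positivity
  field_simp
  simp
lemma key_identity (P Q U V : ℕ) (M : ℕ) :
    4 * ((P : ℝ) + Q) / 2 ^ (M + 1) - 4 * ((U : ℝ) + V) / 2 ^ (M + 1)
      = (4 * (P : ℝ) / 2 ^ M - 4 * (V : ℝ) / 2 ^ M
          + (4 * (Q : ℝ) / 2 ^ M - 4 * (U : ℝ) / 2 ^ M)) / 2 := by
  have h : (2 : ℝ) ^ (M + 1) = 2 ^ M * 2 := pow_succ 2 M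
  rw [h]
  have h2 : (2 : ℝ) ^ M ≠ 0 := by positivity
  field_simp
  ring

lemma Afun_rec (a b m : ℕ) :
    Afun (a + 1) (b + 1) (m + 1) = (Afun a (b + 2) m + Afun (a + 2) b m) / 2 := by
  set K := (m + 1) / (2 * (a + b + 2)) with hKdef
  have e1 : (a + 1) + (b + 1) = a + b + 2 := by omega
  have e2 : a + (b + 2) = a + b + 2 := by omega
  have e3 : (a + 2) + b = a + b + 2 := by omega
  rw [Afun_ext (a + 1) (b + 1) (m + 1) K (by omega) (by rw [e1]),
    Afun_ext a (b + 2) m K (by omega)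
      (by rw [e2]; exact le_trans (Nat.div_le_div_right (by omega)) hKdef.ge),
    Afun_ext (a + 2) b m K (by omega)
      (by rw [e3]; exact le_trans (Nat.div_le_div_right (by omega)) hKdef.ge),
    ← Finset.sum_add_distrib, Finset.sum_div]
  refine Finset.sum_congr rfl fun n _ => ?_
  rcases Int.even_or_odd ((m : ℤ) - a) with ⟨t, ht⟩ | ⟨t, ht⟩
  · -- m - a = 2t
    have hL : ((((m + 1) : ℕ) : ℤ) - (((a + 1) : ℕ) : ℤ)) / 2 = t := by push_cast; omega
    have hLM : (2 * t + (((a + 1) : ℕ) : ℤ) + 2).toNat = m + 3 := by push_cast; omega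
    have hR1 : (((m : ℕ) : ℤ) - ((a : ℕ) : ℤ)) / 2 = t := by omega
    have hR1M : (2 * t + ((a : ℕ) : ℤ) + 2).toNat = m + 2 := by omega
    have hR2 : (((m : ℕ) : ℤ) - (((a + 2) : ℕ) : ℤ)) / 2 = t - 1 := by push_cast; omega
    have hR2M : (2 * (t - 1) + (((a + 2) : ℕ) : ℤ) + 2).toNat = m + 2 := by push_cast; omega
    rw [Aterm_eq (a + 1) (b + 1) (m + 1) n t (m + 3) hL hLM,
      Aterm_eq a (b + 2) m n t (m + 2) hR1 hR1M,
      Aterm_eq (a + 2) b m n (t - 1) (m + 2) hR2 hR2M]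
    have hsplit1 : Jz (t - ((((a + 1) : ℕ) : ℤ) + (((b + 1) : ℕ) : ℤ)) * n) (m + 3)
        = Jz (t - ((((a + 1) : ℕ) : ℤ) + (((b + 1) : ℕ) : ℤ)) * n) (m + 2)
          + Jz (t - ((((a + 1) : ℕ) : ℤ) + (((b + 1) : ℕ) : ℤ)) * n - 1) (m + 2) :=
      Jz_succ _ (m + 2)
    have hsplit2 : Jz (t - (((b + 1) : ℕ) : ℤ) - ((((a + 1) : ℕ) : ℤ) + (((b + 1) : ℕ) : ℤ)) * n) (m + 3)
        = Jz (t - (((b + 1) : ℕ) : ℤ) - ((((a + 1) : ℕ) : ℤ) + (((b + 1) : ℕ) : ℤ)) * n) (m + 2)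
          + Jz (t - (((b + 1) : ℕ) : ℤ) - ((((a + 1) : ℕ) : ℤ) + (((b + 1) : ℕ) : ℤ)) * n - 1) (m + 2) :=
      Jz_succ _ (m + 2)
    rw [hsplit1, hsplit2]
    push_cast
    rw [show (2:ℝ)^(m+3) = 2^(m+2)*2 from pow_succ 2 (m+2)]
    have h2 : (2:ℝ)^(m+2) ≠ 0 := by positivity
    field_simp
    ring
  · -- m - a = 2t + 1
    have hL : ((((m + 1) : ℕ) : ℤ) - (((a + 1) : ℕ) : ℤ)) / 2 = t := by push_cast; omega
    have hLM : (2 * t + (((a + 1) : ℕ) : ℤ) + 2).toNat = m + 2 := by push_cast; omega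
    have hR1 : (((m : ℕ) : ℤ) - ((a : ℕ) : ℤ)) / 2 = t := by omega
    have hR1M : (2 * t + ((a : ℕ) : ℤ) + 2).toNat = m + 1 := by omega
    have hR2 : (((m : ℕ) : ℤ) - (((a + 2) : ℕ) : ℤ)) / 2 = t - 1 := by push_cast; omega
    have hR2M : (2 * (t - 1) + (((a + 2) : ℕ) : ℤ) + 2).toNat = m + 1 := by push_cast; omega
    rw [Aterm_eq (a + 1) (b + 1) (m + 1) n t (m + 2) hL hLM,
      Aterm_eq a (b + 2) m n t (m + 1) hR1 hR1M,
      Aterm_eq (a + 2) b m n (t - 1) (m + 1) hR2 hR2M]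
    have hsplit1 : Jz (t - ((((a + 1) : ℕ) : ℤ) + (((b + 1) : ℕ) : ℤ)) * n) (m + 2)
        = Jz (t - ((((a + 1) : ℕ) : ℤ) + (((b + 1) : ℕ) : ℤ)) * n) (m + 1)
          + Jz (t - ((((a + 1) : ℕ) : ℤ) + (((b + 1) : ℕ) : ℤ)) * n - 1) (m + 1) :=
      Jz_succ _ (m + 1)
    have hsplit2 : Jz (t - (((b + 1) : ℕ) : ℤ) - ((((a + 1) : ℕ) : ℤ) + (((b + 1) : ℕ) : ℤ)) * n) (m + 2)
        = Jz (t - (((b + 1) : ℕ) : ℤ) - ((((a + 1) : ℕ) : ℤ) + (((b + 1) : ℕ) : ℤ)) * n) (m + 1)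
          + Jz (t - (((b + 1) : ℕ) : ℤ) - ((((a + 1) : ℕ) : ℤ) + (((b + 1) : ℕ) : ℤ)) * n - 1) (m + 1) :=
      Jz_succ _ (m + 1)
    rw [hsplit1, hsplit2]
    push_cast
    rw [show (2:ℝ)^(m+2) = 2^(m+1)*2 from pow_succ 2 (m+1)]
    have h2 : (2:ℝ)^(m+1) ≠ 0 := by positivity
    field_simp
    ring
lemma Gfun_one (x y m : ℕ) (h : x = 0 ∨ y = 0) : Gfun x y m = 1 := by
  by_cases h0 : x = 0 ∧ y = 0
  · rw [Gfun, if_pos h0]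
  · rcases h with hx | hy
    · have hy : 0 < y := by omega
      rw [Gfun_eq_A x y m h0, hx, Afun_x0 y m hy, Afun_y0]
      ring
    · have hx : 0 < x := by omega
      rw [Gfun_eq_A x y m h0, hy, Afun_y0, Afun_x0 x m hx]
      ring

lemma Gfun_base (a b : ℕ) : Gfun (a + 1) (b + 1) 0 = 0 := by
  rw [Gfun_eq_A _ _ _ (by omega), Afun_zero _ _ (by omega), Afun_zero _ _ (by omega)]
  ring

lemma Gfun_rec (a b m : ℕ) :
    Gfun (a + 1) (b + 1) (m + 1) = (Gfun a (b + 2) m + Gfun (a + 2) b m) / 2 := by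
  rw [Gfun_eq_A _ _ _ (by omega), Gfun_eq_A _ _ _ (by omega), Gfun_eq_A _ _ _ (by omega),
    Afun_rec a b m, Afun_rec b a m]
  ring

/-! ### The stopped random walk -/

def wstep (e : ZMod 2) : ℤ := if e = 1 then 1 else -1

lemma wstep_cases (e : ZMod 2) : wstep e = 1 ∨ wstep e = -1 := by
  rw [wstep]; split <;> simp

def W (u v : ℤ) (s : ℕ → ZMod 2) : ℕ → ℤ
  | 0 => 0
  | n + 1 => if W u v s n = u ∨ W u v s n = v then W u v s n else W u v s n + wstep (s n)

lemma W_congr (u v : ℤ) (s s' : ℕ → ZMod 2) (n : ℕ) (h : ∀ i < n, s i = s' i) :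
    W u v s n = W u v s' n := by
  induction n with
  | zero => rfl
  | succ n ih =>
    have ih' := ih (fun i hi => h i (by omega))
    rw [W, W, ih', h n (by omega)]

lemma W_mem (u v : ℤ) (hu : 0 ≤ u) (hv : v ≤ 0) (s : ℕ → ZMod 2) (n : ℕ) :
    v ≤ W u v s n ∧ W u v s n ≤ u := by
  induction n with
  | zero => exact ⟨hv, hu⟩
  | succ n ih =>
    rw [W]
    split
    · exact ih
    · rename_i hne
      push_neg at hne
      rcases wstep_cases (s n) with h | h <;> rw [h] <;>
        [skip; skip] <;> omega

lemma W_zero (u v : ℤ) (h : u = 0 ∨ v = 0) (s : ℕ → ZMod 2) (n : ℕ) : W u v s n = 0 := by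
  induction n with
  | zero => rfl
  | succ n ih =>
    rw [W, ih]
    rcases h with h | h <;> simp [h]

lemma W_shift (u v : ℤ) (hu : 0 < u) (hv : v < 0) (s : ℕ → ZMod 2) (n : ℕ) :
    W u v s (n + 1)
      = wstep (s 0) + W (u - wstep (s 0)) (v - wstep (s 0)) (fun i => s (i + 1)) n := by
  induction n with
  | zero =>
    show (if W u v s 0 = u ∨ W u v s 0 = v then W u v s 0 else W u v s 0 + wstep (s 0))
        = wstep (s 0) + W (u - wstep (s 0)) (v - wstep (s 0)) (fun i => s (i + 1)) 0
    rw [show W u v s 0 = 0 from rfl,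
      show W (u - wstep (s 0)) (v - wstep (s 0)) (fun i => s (i + 1)) 0 = 0 from rfl,
      if_neg (by omega)]
    ring
  | succ n ih =>
    rw [W, ih, W]
    by_cases hb : W (u - wstep (s 0)) (v - wstep (s 0)) (fun i => s (i + 1)) n = u - wstep (s 0)
        ∨ W (u - wstep (s 0)) (v - wstep (s 0)) (fun i => s (i + 1)) n = v - wstep (s 0)
    · rw [if_pos hb, if_pos (by rcases hb with h | h <;> rw [h] <;> [left; right] <;> ring)]
    · push_neg at hb
      rw [if_neg (by push_neg; constructor <;> intro hc <;> omega), if_neg (by push_neg; exact hb)]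
      ring

/-! ### Counting exit paths -/

def extseq (m : ℕ) (w : Fin m → ZMod 2) : ℕ → ZMod 2 :=
  fun i => if h : i < m then w ⟨i, h⟩ else 0

noncomputable def Bset (x y m : ℕ) : Finset (Fin m → ZMod 2) :=
  Finset.univ.filter
    (fun w => W (x : ℤ) (-(y : ℤ)) (extseq m w) m = (x : ℤ)
      ∨ W (x : ℤ) (-(y : ℤ)) (extseq m w) m = -(y : ℤ))

lemma Bset_full (x y m : ℕ) (h : x = 0 ∨ y = 0) : Bset x y m = Finset.univ := by
  rw [Bset, Finset.filter_true_of_mem]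
  intro w _
  have h' : (x : ℤ) = 0 ∨ -(y : ℤ) = 0 := by rcases h with h | h <;> simp [h]
  rw [W_zero _ _ h']
  rcases h' with h' | h' <;> [left; right] <;> omega

lemma Bset_base (a b : ℕ) : Bset (a + 1) (b + 1) 0 = ∅ := by
  rw [Bset, Finset.filter_eq_empty_iff]
  intro w _
  rw [show W ((a + 1 : ℕ) : ℤ) (-((b + 1 : ℕ) : ℤ)) (extseq 0 w) 0 = 0 from rfl]
  push_cast
  omega

lemma Bset_rec (a b m : ℕ) :
    (Bset (a + 1) (b + 1) (m + 1)).card = (Bset a (b + 2) m).card + (Bset (a + 2) b m).card := by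
  classical
  have hcard : ∀ (x y k : ℕ), (Bset x y k).card
      = ∑ w : Fin k → ZMod 2, (if W (x : ℤ) (-(y : ℤ)) (extseq k w) k = (x : ℤ)
          ∨ W (x : ℤ) (-(y : ℤ)) (extseq k w) k = -(y : ℤ) then 1 else 0) := by
    intro x y k
    rw [Bset, Finset.card_filter]
  rw [hcard, hcard, hcard]
  rw [← Equiv.sum_comp (Fin.consEquiv (fun _ : Fin (m + 1) => ZMod 2))]
  rw [Fintype.sum_prod_type]
  rw [show (Finset.univ : Finset (ZMod 2)) = {0, 1} from by decide]
  rw [Finset.sum_insert (by decide), Finset.sum_singleton]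
  have key : ∀ (e : ZMod 2) (w : Fin m → ZMod 2),
      W ((a + 1 : ℕ) : ℤ) (-((b + 1 : ℕ) : ℤ)) (extseq (m + 1) (Fin.consEquiv _ (e, w))) (m + 1)
        = wstep e + W ((a + 1 : ℤ) - wstep e) (-((b + 1 : ℤ)) - wstep e) (extseq m w) m := by
    intro e w
    have h0 : extseq (m + 1) (Fin.consEquiv _ (e, w)) 0 = e := by
      simp [extseq, Fin.consEquiv]
    rw [W_shift _ _ (by push_cast; omega) (by push_cast; omega), h0]
    have hseq := W_congr (((a + 1 : ℕ) : ℤ) - wstep e) (-((b + 1 : ℕ) : ℤ) - wstep e)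
      (fun i => extseq (m + 1) (Fin.consEquiv _ (e, w)) (i + 1)) (extseq m w) m
      (fun i hi => by
        simp only [extseq]
        rw [dif_pos (show i + 1 < m + 1 by omega), dif_pos hi]
        exact Fin.cons_succ (α := fun _ : Fin (m + 1) => ZMod 2) e w ⟨i, hi⟩)
    rw [hseq]
    push_cast
    ring_nf
  have hw1 : wstep (1 : ZMod 2) = 1 := by simp [wstep]
  have hw0 : wstep (0 : ZMod 2) = -1 := by
    rw [wstep, if_neg (by decide)]
  rw [add_comm]
  congr 1
  · refine Finset.sum_congr rfl fun w _ => ?_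
    rw [key 1 w, hw1]
    refine if_congr ?_ rfl rfl
    push_cast
    ring_nf
    omega
  · refine Finset.sum_congr rfl fun w _ => ?_
    rw [key 0 w, hw0]
    refine if_congr ?_ rfl rfl
    push_cast
    ring_nf
    omega
lemma Bcard_eq : ∀ (m x y : ℕ), ((Bset x y m).card : ℝ) = 2 ^ m * Gfun x y m := by
  intro m
  induction m with
  | zero =>
    intro x y
    by_cases h : x = 0 ∨ y = 0
    · rw [Bset_full _ _ _ h, Gfun_one _ _ _ h, Finset.card_univ]
      simp
    · push_neg at h
      obtain ⟨a, rfl⟩ := Nat.exists_eq_succ_of_ne_zero h.1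
      obtain ⟨b, rfl⟩ := Nat.exists_eq_succ_of_ne_zero h.2
      rw [Bset_base, Gfun_base]
      simp
  | succ m ih =>
    intro x y
    by_cases h : x = 0 ∨ y = 0
    · rw [Bset_full _ _ _ h, Gfun_one _ _ _ h, Finset.card_univ]
      have : Fintype.card (Fin (m + 1) → ZMod 2) = 2 ^ (m + 1) := by
        rw [Fintype.card_fun]
        simp
      rw [this]
      simp
    · push_neg at h
      obtain ⟨a, rfl⟩ := Nat.exists_eq_succ_of_ne_zero h.1
      obtain ⟨b, rfl⟩ := Nat.exists_eq_succ_of_ne_zero h.2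
      rw [Bset_rec, Gfun_rec]
      push_cast
      rw [ih a (b + 2), ih (a + 2) b, pow_succ]
      ring
open scoped ENNReal

/-! ### The Cantor group and its Haar measure -/

instance : TopologicalSpace (ZMod 2) := ⊥
instance : DiscreteTopology (ZMod 2) := ⟨rfl⟩

def Cant : Type := ℕ → ZMod 2

instance : AddCommGroup Cant := inferInstanceAs (AddCommGroup (ℕ → ZMod 2))
instance : TopologicalSpace Cant := inferInstanceAs (TopologicalSpace (ℕ → ZMod 2))
instance : IsTopologicalAddGroup Cant := inferInstanceAs (IsTopologicalAddGroup (ℕ → ZMod 2))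
instance : CompactSpace Cant := inferInstanceAs (CompactSpace (ℕ → ZMod 2))
instance : T2Space Cant := inferInstanceAs (T2Space (ℕ → ZMod 2))
instance : SecondCountableTopology Cant := inferInstanceAs (SecondCountableTopology (ℕ → ZMod 2))
instance : LocallyCompactSpace Cant := inferInstanceAs (LocallyCompactSpace (ℕ → ZMod 2))
instance : MeasurableSpace Cant := borel Cant
instance : BorelSpace Cant := ⟨rfl⟩

/-- Evaluation. -/
def ap (ω : Cant) (i : ℕ) : ZMod 2 := ω i

noncomputable def Kuniv : TopologicalSpace.PositiveCompacts Cant :=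
  ⟨⟨Set.univ, isCompact_univ⟩, by simp [interior_univ]⟩

noncomputable def mu : Measure Cant := Measure.addHaarMeasure Kuniv

instance : mu.IsAddLeftInvariant := Measure.isAddLeftInvariant_addHaarMeasure Kuniv

instance : IsProbabilityMeasure mu := by
  constructor
  rw [show (Set.univ : Set Cant) = ↑Kuniv from rfl]
  exact Measure.addHaarMeasure_self

lemma zmod2_cases : ∀ e : ZMod 2, e = 0 ∨ e = 1 := by decide

/-! ### Cylinders -/

def cyl (k : ℕ) (w : Fin k → ZMod 2) : Set Cant := {ω | ∀ i : Fin k, ap ω i = w i}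

def proj (k : ℕ) (ω : Cant) : Fin k → ZMod 2 := fun i => ap ω i

lemma cyl_eq_preimage (k : ℕ) (w : Fin k → ZMod 2) : cyl k w = proj k ⁻¹' {w} := by
  ext ω
  simp [cyl, proj, Set.mem_preimage, funext_iff]

lemma isOpen_cyl (k : ℕ) (w : Fin k → ZMod 2) : IsOpen (cyl k w) := by
  have : cyl k w = ⋂ i : Fin k, (fun ω : Cant => ap ω i) ⁻¹' {w i} := by
    ext ω; simp [cyl]
  rw [this]
  refine isOpen_iInter_of_finite fun i => ?_
  exact (continuous_apply (A := fun _ : ℕ => ZMod 2) (i : ℕ)).isOpen_preimage _ trivial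

lemma measurableSet_cyl (k : ℕ) (w : Fin k → ZMod 2) : MeasurableSet (cyl k w) :=
  (isOpen_cyl k w).measurableSet

lemma cyl_disjoint {k : ℕ} {w w' : Fin k → ZMod 2} (h : w ≠ w') :
    Disjoint (cyl k w) (cyl k w') := by
  rw [Set.disjoint_iff_inter_eq_empty]
  ext ω
  simp only [Set.mem_inter_iff, cyl, Set.mem_setOf_eq, Set.mem_empty_iff_false, iff_false]
  rintro ⟨h1, h2⟩
  exact h (funext fun i => (h1 i).symm.trans (h2 i))

def gdiff (k : ℕ) (f : Fin k → ZMod 2) : Cant := extseq k f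

lemma cyl_translate (k : ℕ) (w w' : Fin k → ZMod 2) :
    cyl k w = (fun ω => gdiff k (fun i => w' i - w i) + ω) ⁻¹' cyl k w' := by
  ext ω
  simp only [Set.mem_preimage, cyl, Set.mem_setOf_eq]
  have hval : ∀ i : Fin k,
      ap (gdiff k (fun j => w' j - w j) + ω) i = (w' i - w i) + ap ω i := by
    intro i
    show extseq k (fun j => w' j - w j) (i : ℕ) + ω (i : ℕ) = _
    rw [extseq, dif_pos i.isLt]
    rfl
  constructor
  · intro h i
    rw [hval i, h i]
    ring
  · intro h i
    have h1 := h i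
    rw [hval i] at h1
    linear_combination h1

lemma mu_cyl (k : ℕ) (w : Fin k → ZMod 2) : mu (cyl k w) = (2 ^ k)⁻¹ := by
  -- all cylinders at level k have the same measure
  have heq : ∀ w' : Fin k → ZMod 2, mu (cyl k w') = mu (cyl k w) := by
    intro w'
    rw [cyl_translate k w' w]
    exact measure_preimage_add mu _ _
  -- they partition the space
  have hcover : (⋃ w' : Fin k → ZMod 2, cyl k w') = Set.univ := by
    ext ω
    simp only [Set.mem_iUnion, Set.mem_univ, iff_true]
    exact ⟨proj k ω, fun i => rfl⟩
  have hdisj : Pairwise (Function.onFun Disjoint fun w' : Fin k → ZMod 2 => cyl k w') :=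
    fun _ _ h => cyl_disjoint h
  have hsum : ∑' w' : Fin k → ZMod 2, mu (cyl k w') = 1 := by
    rw [← measure_iUnion hdisj fun w' => measurableSet_cyl k w', hcover]
    exact measure_univ
  rw [tsum_fintype] at hsum
  rw [Finset.sum_congr rfl (fun w' _ => heq w'), Finset.sum_const, Finset.card_univ] at hsum
  have hcard : Fintype.card (Fin k → ZMod 2) = 2 ^ k := by
    rw [Fintype.card_fun]; simp
  rw [hcard, nsmul_eq_mul] at hsum
  have h2 : ((2 : ℝ≥0∞) ^ k) ≠ 0 := by positivity
  have htop : ((2 : ℝ≥0∞) ^ k) ≠ ⊤ := by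
    exact ENNReal.pow_ne_top (by norm_num)
  have hcast : ((2 ^ k : ℕ) : ℝ≥0∞) = (2 : ℝ≥0∞) ^ k := by push_cast; rfl
  rw [hcast] at hsum
  calc mu (cyl k w) = (2 ^ k)⁻¹ * ((2 : ℝ≥0∞) ^ k * mu (cyl k w)) := by
        rw [← mul_assoc, ENNReal.inv_mul_cancel h2 htop, one_mul]
  _ = (2 ^ k)⁻¹ := by rw [hsum, mul_one]
/-! ### Filtration and the stopped-walk process -/

noncomputable def Ffilt : Filtration ℕ (inferInstance : MeasurableSpace Cant) where
  seq := fun n => MeasurableSpace.comap (proj n) ⊤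
  mono' := by
    intro i j hij
    show MeasurableSpace.comap (proj i) ⊤ ≤ MeasurableSpace.comap (proj j) ⊤
    have hfac : proj i = (fun (v : Fin j → ZMod 2) (t : Fin i) =>
        v ⟨(t : ℕ), lt_of_lt_of_le t.isLt hij⟩) ∘ proj j := rfl
    rw [hfac, ← MeasurableSpace.comap_comp]
    exact MeasurableSpace.comap_mono le_top
  le' := by
    intro n s hs
    obtain ⟨B, -, rfl⟩ := hs
    have : proj n ⁻¹' B = ⋃ w ∈ B, cyl n w := by
      ext ω
      simp only [Set.mem_preimage, Set.mem_iUnion, cyl_eq_preimage, Set.mem_preimage,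
        Set.mem_singleton_iff]
      constructor
      · intro h; exact ⟨proj n ω, h, rfl⟩
      · rintro ⟨w, hw, rfl⟩; exact hw
    rw [this]
    exact MeasurableSet.biUnion (Set.to_countable B) fun w _ => measurableSet_cyl n w

noncomputable def Xw (x y : ℕ) (c : ℝ) (n : ℕ) (ω : Cant) : ℝ :=
  c * ((W (x : ℤ) (-(y : ℤ)) ω n : ℤ) : ℝ)

lemma W_proj (x y n : ℕ) (ω : Cant) :
    W (x : ℤ) (-(y : ℤ)) ω n = W (x : ℤ) (-(y : ℤ)) (extseq n (proj n ω)) n := by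
  refine W_congr _ _ _ _ n fun i hi => ?_
  rw [extseq, dif_pos hi]
  rfl

lemma Xw_factor (x y : ℕ) (c : ℝ) (n : ℕ) :
    Xw x y c n = (fun v : Fin n → ZMod 2 =>
      c * ((W (x : ℤ) (-(y : ℤ)) (extseq n v) n : ℤ) : ℝ)) ∘ proj n := by
  funext ω
  simp only [Xw, Function.comp_apply]
  rw [W_proj]

lemma Xw_stronglyMeasurable (x y : ℕ) (c : ℝ) (n : ℕ) :
    StronglyMeasurable[Ffilt n] (Xw x y c n) := by
  refine Measurable.stronglyMeasurable ?_
  rw [Xw_factor]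
  have hproj : Measurable[Ffilt n, ⊤] (proj n) := by
    rw [show (Ffilt n : MeasurableSpace Cant) = MeasurableSpace.comap (proj n) ⊤ from rfl]
    exact fun t _ => ⟨t, trivial, rfl⟩
  exact Measurable.comp measurable_from_top hproj

lemma Xw_measurable (x y : ℕ) (c : ℝ) (n : ℕ) : Measurable (Xw x y c n) :=
  ((Xw_stronglyMeasurable x y c n).measurable).mono (Ffilt.le n) le_rfl

lemma Xw_bound (x y : ℕ) (c : ℝ) (n : ℕ) (ω : Cant) : |Xw x y c n ω| ≤ |c| * (x + y) := by
  have hmem := W_mem (x : ℤ) (-(y : ℤ)) (by positivity) (by omega) ω n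
  have habs : |W (x : ℤ) (-(y : ℤ)) ω n| ≤ (x : ℤ) + y :=
    abs_le.mpr (by constructor <;> omega)
  have habs' : |((W (x : ℤ) (-(y : ℤ)) ω n : ℤ) : ℝ)| ≤ (x : ℝ) + y := by
    rw [← Int.cast_abs]
    exact_mod_cast habs
  rw [Xw, abs_mul]
  have := mul_le_mul_of_nonneg_left habs' (abs_nonneg c)
  linarith

lemma Xw_integrable (x y : ℕ) (c : ℝ) (n : ℕ) : Integrable (Xw x y c n) mu := by
  refine ⟨(Xw_measurable x y c n).aestronglyMeasurable, ?_⟩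
  exact HasFiniteIntegral.of_bounded (C := |c| * (x + y))
    (Filter.Eventually.of_forall (Xw_bound x y c n))

lemma Xw_const_on_cyl (x y : ℕ) (c : ℝ) (n : ℕ) (w : Fin n → ZMod 2) (ω : Cant)
    (hω : ω ∈ cyl n w) :
    Xw x y c n ω = c * ((W (x : ℤ) (-(y : ℤ)) (extseq n w) n : ℤ) : ℝ) := by
  rw [Xw]
  congr 2
  refine W_congr _ _ _ _ n fun i hi => ?_
  rw [extseq, dif_pos hi]
  exact (hω ⟨i, hi⟩)

lemma cyl_split (n : ℕ) (w : Fin n → ZMod 2) :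
    cyl n w = cyl (n + 1) (Fin.snoc w 0) ∪ cyl (n + 1) (Fin.snoc w 1) := by
  ext ω
  simp only [Set.mem_union, cyl, Set.mem_setOf_eq]
  constructor
  · intro h
    rcases zmod2_cases (ap ω n) with he | he <;> [left; right] <;>
      (intro i
       refine Fin.lastCases ?_ (fun j => ?_) i
       · rw [Fin.snoc_last]; exact he
       · rw [Fin.snoc_castSucc]; exact h j)
  · rintro (h | h) i <;>
      · have hh := h i.castSucc
        rwa [Fin.snoc_castSucc] at hh

lemma snoc_ne (n : ℕ) (w : Fin n → ZMod 2) :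
    (Fin.snoc w (0 : ZMod 2) : Fin (n + 1) → ZMod 2) ≠ Fin.snoc w 1 := by
  intro h
  have := congrFun h (Fin.last n)
  rw [Fin.snoc_last, Fin.snoc_last] at this
  exact absurd this (by decide)

lemma W_avg (u v : ℤ) (n : ℕ) (w : Fin n → ZMod 2) :
    W u v (extseq (n + 1) (Fin.snoc w 0)) (n + 1) + W u v (extseq (n + 1) (Fin.snoc w 1)) (n + 1)
      = 2 * W u v (extseq n w) n := by
  have h0 : ∀ e : ZMod 2, W u v (extseq (n + 1) (Fin.snoc w e)) n = W u v (extseq n w) n := by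
    intro e
    refine W_congr _ _ _ _ n fun i hi => ?_
    simp only [extseq]
    rw [dif_pos (show i < n + 1 by omega), dif_pos hi]
    exact Fin.snoc_castSucc (α := fun _ : Fin (n + 1) => ZMod 2) (p := w) (x := e) (i := ⟨i, hi⟩)
  have hlast : ∀ e : ZMod 2, extseq (n + 1) (Fin.snoc w e) n = e := by
    intro e
    simp only [extseq]
    rw [dif_pos (show n < n + 1 by omega)]
    exact Fin.snoc_last (α := fun _ : Fin (n + 1) => ZMod 2) (p := w) (x := e)
  rw [W, W, h0, h0, hlast, hlast]
  by_cases hb : W u v (extseq n w) n = u ∨ W u v (extseq n w) n = v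
  · rw [if_pos hb, if_pos hb]; ring
  · rw [if_neg hb, if_neg hb]
    rw [show wstep (0 : ZMod 2) = -1 from by rw [wstep, if_neg (by decide)],
      show wstep (1 : ZMod 2) = 1 from by simp [wstep]]
    ring

lemma integral_cyl (k : ℕ) (w : Fin k → ZMod 2) (f : Cant → ℝ) (val : ℝ)
    (hf : ∀ ω ∈ cyl k w, f ω = val) :
    ∫ ω in cyl k w, f ω ∂mu = val / 2 ^ k := by
  rw [setIntegral_congr_fun (measurableSet_cyl k w) hf, setIntegral_const, measureReal_def, mu_cyl]
  rw [smul_eq_mul]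
  rw [show ((2 : ℝ≥0∞) ^ k)⁻¹.toReal = ((2 : ℝ) ^ k)⁻¹ from by
    rw [ENNReal.toReal_inv]; norm_num]
  rw [div_eq_mul_inv, mul_comm]

lemma setIntegral_step (x y : ℕ) (c : ℝ) (n : ℕ) (w : Fin n → ZMod 2) :
    ∫ ω in cyl n w, Xw x y c (n + 1) ω ∂mu = ∫ ω in cyl n w, Xw x y c n ω ∂mu := by
  have hdisj : Disjoint (cyl (n + 1) (Fin.snoc w (0 : ZMod 2))) (cyl (n + 1) (Fin.snoc w 1)) :=
    cyl_disjoint (snoc_ne n w)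
  have hsplit := cyl_split n w
  have hint := Xw_integrable x y c (n + 1)
  rw [integral_cyl _ _ _ _ (fun ω hω => Xw_const_on_cyl x y c n w ω hω)]
  rw [hsplit, setIntegral_union hdisj (measurableSet_cyl _ _) hint.integrableOn hint.integrableOn]
  rw [integral_cyl _ _ _ _ (fun ω hω => Xw_const_on_cyl x y c (n + 1) (Fin.snoc w 0) ω hω),
    integral_cyl _ _ _ _ (fun ω hω => Xw_const_on_cyl x y c (n + 1) (Fin.snoc w 1) ω hω)]
  have havg : ((W (x : ℤ) (-(y : ℤ)) (extseq (n + 1) (Fin.snoc w 0)) (n + 1) : ℤ) : ℝ)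
      + ((W (x : ℤ) (-(y : ℤ)) (extseq (n + 1) (Fin.snoc w 1)) (n + 1) : ℤ) : ℝ)
      = 2 * ((W (x : ℤ) (-(y : ℤ)) (extseq n w) n : ℤ) : ℝ) := by
    exact_mod_cast W_avg (x : ℤ) (-(y : ℤ)) n w
  rw [pow_succ]
  have h2n : ((2 : ℝ) ^ n) ≠ 0 := by positivity
  field_simp
  linear_combination c * havg

lemma setIntegral_eq_of_measurable (x y : ℕ) (c : ℝ) (n : ℕ) (s : Set Cant)
    (hs : MeasurableSet[Ffilt n] s) :
    ∫ ω in s, Xw x y c n ω ∂mu = ∫ ω in s, Xw x y c (n + 1) ω ∂mu := by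
  classical
  obtain ⟨B, -, rfl⟩ := hs
  have hrw : proj n ⁻¹' B = ⋃ w ∈ B.toFinite.toFinset, cyl n w := by
    ext ω
    simp only [Set.mem_preimage, Set.mem_iUnion, cyl_eq_preimage, Set.mem_preimage,
      Set.mem_singleton_iff, Set.Finite.mem_toFinset]
    constructor
    · intro h; exact ⟨proj n ω, h, rfl⟩
    · rintro ⟨v, hv, rfl⟩; exact hv
  have hd : (↑B.toFinite.toFinset : Set (Fin n → ZMod 2)).Pairwise
      (Function.onFun Disjoint fun w => cyl n w) := fun _ _ _ _ hne => cyl_disjoint hne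
  rw [hrw,
    MeasureTheory.integral_biUnion_finset _ (fun w _ => measurableSet_cyl n w) hd
      (fun w _ => (Xw_integrable x y c n).integrableOn),
    MeasureTheory.integral_biUnion_finset _ (fun w _ => measurableSet_cyl n w) hd
      (fun w _ => (Xw_integrable x y c (n + 1)).integrableOn)]
  exact Finset.sum_congr rfl fun w _ => (setIntegral_step x y c n w).symm

lemma Xw_martingale (x y : ℕ) (c : ℝ) : Martingale (Xw x y c) Ffilt mu := by
  refine martingale_nat (fun n => Xw_stronglyMeasurable x y c n) (fun n => Xw_integrable x y c n)
    (fun n => ?_)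
  have hle : (Ffilt n : MeasurableSpace Cant) ≤ (inferInstance : MeasurableSpace Cant) :=
    Ffilt.le n
  refine MeasureTheory.ae_eq_condExp_of_forall_setIntegral_eq hle
    (Xw_integrable x y c (n + 1))
    (fun s _ _ => (Xw_integrable x y c n).integrableOn)
    (fun s hs _ => setIntegral_eq_of_measurable x y c n s hs)
    ((Xw_stronglyMeasurable x y c n).aestronglyMeasurable)
lemma W_step_abs (u v : ℤ) (s : ℕ → ZMod 2) (n : ℕ) :
    |W u v s (n + 1) - W u v s n| ≤ 1 := by
  rw [W]
  split
  · simp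
  · rw [add_sub_cancel_left]
    rcases wstep_cases (s n) with h | h <;> rw [h] <;> norm_num

lemma Xw_increment (x y : ℕ) (c : ℝ) (hc : 0 < c) (n : ℕ) (ω : Cant) :
    |Xw x y c (n + 1) ω - Xw x y c n ω| ≤ c := by
  have h := W_step_abs (x : ℤ) (-(y : ℤ)) ω n
  have h' : |((W (x : ℤ) (-(y : ℤ)) ω (n + 1) : ℤ) : ℝ) - ((W (x : ℤ) (-(y : ℤ)) ω n : ℤ) : ℝ)| ≤ 1 := by
    rw [← Int.cast_sub, ← Int.cast_abs]
    exact_mod_cast h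
  rw [Xw, Xw, ← mul_sub, abs_mul, abs_of_pos hc]
  nlinarith [abs_nonneg (((W (x : ℤ) (-(y : ℤ)) ω (n + 1) : ℤ) : ℝ) - ((W (x : ℤ) (-(y : ℤ)) ω n : ℤ) : ℝ))]

lemma event_eq (x y m : ℕ) (c : ℝ) (hc : 0 < c) :
    {ω : Cant | Xw x y c m ω - Xw x y c 0 ω ≥ (x : ℝ) * c
        ∨ Xw x y c m ω - Xw x y c 0 ω ≤ -((y : ℝ) * c)}
      = ⋃ w ∈ Bset x y m, cyl m w := by
  ext ω
  have hX0 : Xw x y c 0 ω = 0 := by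
    rw [Xw, show W (x : ℤ) (-(y : ℤ)) ω 0 = 0 from rfl]
    norm_num
  have hmem := W_mem (x : ℤ) (-(y : ℤ)) (by positivity) (by omega) ω m
  have key : (Xw x y c m ω - Xw x y c 0 ω ≥ (x : ℝ) * c
      ∨ Xw x y c m ω - Xw x y c 0 ω ≤ -((y : ℝ) * c))
      ↔ (W (x : ℤ) (-(y : ℤ)) ω m = (x : ℤ) ∨ W (x : ℤ) (-(y : ℤ)) ω m = -(y : ℤ)) := by
    rw [hX0, sub_zero, Xw]
    constructor
    · rintro (h | h)
      · left
        have h1 : (x : ℝ) ≤ ((W (x : ℤ) (-(y : ℤ)) ω m : ℤ) : ℝ) := by nlinarith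
        have h2 : (x : ℤ) ≤ W (x : ℤ) (-(y : ℤ)) ω m := by exact_mod_cast h1
        omega
      · right
        have h1 : ((W (x : ℤ) (-(y : ℤ)) ω m : ℤ) : ℝ) ≤ -(y : ℝ) := by nlinarith
        have h2 : W (x : ℤ) (-(y : ℤ)) ω m ≤ -(y : ℤ) := by exact_mod_cast h1
        omega
    · rintro (h | h)
      · left
        rw [h]
        push_cast
        exact le_of_eq (by ring)
      · right
        rw [h]
        push_cast
        exact le_of_eq (by ring)
  rw [Set.mem_setOf_eq, key]
  simp only [Set.mem_iUnion, cyl_eq_preimage, Set.mem_preimage, Set.mem_singleton_iff, Bset,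
    Finset.mem_filter, Finset.mem_univ, true_and, exists_prop]
  constructor
  · intro h
    exact ⟨proj m ω, by rw [← W_proj]; exact h, rfl⟩
  · rintro ⟨w, hw, rfl⟩
    rw [← W_proj] at hw
    exact hw

lemma measure_event (x y m : ℕ) (c : ℝ) (hc : 0 < c) :
    (mu {ω : Cant | Xw x y c m ω - Xw x y c 0 ω ≥ (x : ℝ) * c
        ∨ Xw x y c m ω - Xw x y c 0 ω ≤ -((y : ℝ) * c)}).toReal = Gfun x y m := by
  rw [event_eq x y m c hc]
  rw [measure_biUnion_finset (fun _ _ _ _ hne => cyl_disjoint hne)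
    (fun w _ => measurableSet_cyl m w)]
  rw [Finset.sum_congr rfl (fun w _ => mu_cyl m w), Finset.sum_const, nsmul_eq_mul]
  rw [ENNReal.toReal_mul]
  rw [show ((2 : ℝ≥0∞) ^ m)⁻¹.toReal = ((2 : ℝ) ^ m)⁻¹ from by rw [ENNReal.toReal_inv]; norm_num]
  have hcard := Bcard_eq m x y
  have h2m : ((2 : ℝ) ^ m) ≠ 0 := by positivity
  rw [ENNReal.toReal_natCast]
  rw [hcard]
  field_simp


theorem exists_martingale_attaining_bound (c : ℝ) (hc : 0 < c) (x y : ℕ) :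
    ∃ (Ω : Type) (m0 : MeasurableSpace Ω) (μ : Measure Ω) (_ : IsProbabilityMeasure μ)
      (ℱ : Filtration ℕ m0) (X : ℕ → Ω → ℝ),
      Martingale X ℱ μ ∧
      (∀ m : ℕ, ∀ᵐ ω ∂μ, |X (m + 1) ω - X m ω| ≤ c) ∧
      (∀ m : ℕ,
        (μ {ω | X m ω - X 0 ω ≥ (x : ℝ) * c ∨ X m ω - X 0 ω ≤ -((y : ℝ) * c)}).toReal
          = Gfun x y m) := by
  refine ⟨Cant, inferInstance, mu, inferInstance, Ffilt, Xw x y c,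
    Xw_martingale x y c, ?_, ?_⟩
  · intro m
    exact Filter.Eventually.of_forall (Xw_increment x y c hc m)
  · intro m
    exact measure_event x y m c hc
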